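/- Let a, b, A, B ∈ ℚ with a ≠ 0, B ≠ 0, and A² − 4B ≠ 0. If the set of rational points (x, y) ∈ ℚ² on the curve E₁ : y² = x³ + A·x² + B·x is infinite, then the set of X ∈ ℚ for which there exist Y, p, q ∈ ℚ with Y² = ((X − b)/a)³ − 2A·((X − b)/a)² + (A² − 4B)·((X − b)/a) and X = a·p² + b·q² is infinite. -/

import Mathlib

lemma quad_finite (c d : ℚ) : {x : ℚ | x ^ 2 + c * x + d = 0}.Finite := by
  by_cases h : {x : ℚ | x ^ 2 + c * x + d = 0}.Nonempty
  · obtain ⟨x₀, hx₀⟩ := h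
    have hx₀' : x₀ ^ 2 + c * x₀ + d = 0 := hx₀
    apply Set.Finite.subset ((Set.finite_singleton (-c - x₀)).insert x₀)
    intro x hx
    have hx' : x ^ 2 + c * x + d = 0 := hx
    have hm : (x - x₀) * (x + x₀ + c) = 0 := by linear_combination hx' - hx₀'
    simp only [Set.mem_insert_iff, Set.mem_singleton_iff]
    rcases mul_eq_zero.1 hm with h1 | h1
    · left; linarith
    · right; linarith
  · rw [Set.not_nonempty_iff_eq_empty] at h; simp [h]

theorem stmt_15 (a b A B : ℚ) (ha : a ≠ 0) (hB : B ≠ 0) (hAB : A ^ 2 - 4 * B ≠ 0)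
    (hinf : {P : ℚ × ℚ | P.2 ^ 2 = P.1 ^ 3 + A * P.1 ^ 2 + B * P.1}.Infinite) :
    {x : ℚ | ∃ Y p q : ℚ, Y ^ 2 = ((x - b) / a) ^ 3 - 2 * A * ((x - b) / a) ^ 2
      + (A ^ 2 - 4 * B) * ((x - b) / a) ∧ x = a * p ^ 2 + b * q ^ 2}.Infinite := by
  classical
  set S : Set (ℚ × ℚ) := {P | P.2 ^ 2 = P.1 ^ 3 + A * P.1 ^ 2 + B * P.1} with hSdef
  set f : ℚ × ℚ → ℚ := fun P => a * (P.2 / P.1) ^ 2 + b with hfdef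
  set S' : Set (ℚ × ℚ) := S \ {((0 : ℚ), (0 : ℚ))} with hS'def
  have hS' : S'.Infinite := hinf.diff (Set.finite_singleton _)
  have hx0 : ∀ P ∈ S', P.1 ≠ 0 := by
    rintro ⟨x, y⟩ ⟨hP, hne⟩ hx
    have hy : y ^ 2 = x ^ 3 + A * x ^ 2 + B * x := hP
    subst hx
    have hy0 : y = 0 := by
      have : y ^ 2 = 0 := by simpa using hy
      exact pow_eq_zero_iff (by norm_num) |>.1 this
    exact hne (by simp [hy0])
  -- image is contained in target
  have hsub : f '' S' ⊆ {x : ℚ | ∃ Y p q : ℚ, Y ^ 2 = ((x - b) / a) ^ 3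
      - 2 * A * ((x - b) / a) ^ 2 + (A ^ 2 - 4 * B) * ((x - b) / a)
      ∧ x = a * p ^ 2 + b * q ^ 2} := by
    rintro _ ⟨⟨x, y⟩, hP, rfl⟩
    have hx : x ≠ 0 := hx0 _ hP
    have hy : y ^ 2 = x ^ 3 + A * x ^ 2 + B * x := hP.1
    refine ⟨y * (B - x ^ 2) / x ^ 2, y / x, 1, ?_, by simp only [hfdef]; ring⟩
    have hXb : (f (x, y) - b) / a = (y / x) ^ 2 := by
      simp only [hfdef]; field_simp; ring
    rw [hXb]
    field_simp
    linear_combination (y^2 * (A*x^2 - y^2 - x^3 - B*x)) * hy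
  -- image is infinite
  have himg : (f '' S').Infinite := by
    intro hfin
    apply hS'
    have hcov : S' ⊆ ⋃ c ∈ f '' S', S' ∩ f ⁻¹' {c} := by
      intro P hP
      exact Set.mem_biUnion ⟨P, hP, rfl⟩ ⟨hP, rfl⟩
    refine Set.Finite.subset (Set.Finite.biUnion hfin ?_) hcov
    intro c hc
    by_cases hne : (S' ∩ f ⁻¹' {c}).Nonempty
    · obtain ⟨P₀, hP₀S, hP₀f⟩ := hne
      set r : ℚ := P₀.2 / P₀.1 with hrdef
      set t : ℚ := r ^ 2 with htdef
      have hc0 : c = a * t + b := by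
        have h := hP₀f
        simp only [Set.mem_preimage, Set.mem_singleton_iff, hfdef] at h
        rw [← h, htdef, hrdef]
      have hroots := quad_finite (A - t) B
      apply Set.Finite.subset
        ((hroots.image (fun x => (x, r * x))).union (hroots.image (fun x => (x, -(r * x)))))
      rintro ⟨x, y⟩ ⟨hPS, hPf⟩
      have hx : x ≠ 0 := hx0 _ hPS
      have hy : y ^ 2 = x ^ 3 + A * x ^ 2 + B * x := hPS.1
      have hfP : a * (y / x) ^ 2 + b = c := hPf
      have hxr : (y / x) ^ 2 = t := by
        rw [hc0] at hfP
        have h2 : a * (y / x) ^ 2 = a * t := by linarith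
        exact mul_left_cancel₀ ha h2
      have hy2 : y ^ 2 = t * x ^ 2 := by
        have h3 : (y / x) ^ 2 * x ^ 2 = t * x ^ 2 := by rw [hxr]
        field_simp at h3
        linarith [h3]
      have hq : x ^ 2 + (A - t) * x + B = 0 := by
        have hz : x * (x ^ 2 + (A - t) * x + B) = 0 := by linear_combination hy2 - hy
        rcases mul_eq_zero.1 hz with h1 | h1
        · exact absurd h1 hx
        · exact h1
      have hyx : y = r * x ∨ y = -(r * x) := by
        have hm : (y / x - r) * (y / x + r) = 0 := by linear_combination hxr
        rcases mul_eq_zero.1 hm with h1 | h1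
        · left
          have h4 : y / x = r := by linarith
          field_simp at h4
          linarith [h4]
        · right
          have h4 : y / x = -r := by linarith
          field_simp at h4
          linarith [h4]
      rcases hyx with h1 | h1
      · exact Or.inl ⟨x, hq, by rw [h1]⟩
      · exact Or.inr ⟨x, hq, by rw [h1]⟩
    · rw [Set.not_nonempty_iff_eq_empty] at hne
      rw [hne]; exact Set.finite_empty
  exact himg.mono hsub
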